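/- Let 0 < s < 1, 1 < r₂ < r₁ < ∞, u ∈ W₀^{s,r₁}(Ω) nonnegative, v ∈ W₀^{s,r₁}(Ω) ∩ L^∞(Ω), u_k = u + 1/k. Then ψ_k := |v|^{r₁}/u_k^{r₂-1} and η_k := |v|^{r₁-r₂+1}/u_k^{r₁-r₂} both belong to W₀^{s,r₁}(Ω). -/

import Mathlib

open MeasureTheory Real ENNReal

noncomputable section

abbrev Rd (d : ℕ) := EuclideanSpace ℝ (Fin d)

/-- Gagliardo energy `∬ |u(x)-u(y)|^r / |x-y|^{d+sr} dx dy` as an `ℝ≥0∞`-valued integral. -/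
def gEnergy (d : ℕ) (s r : ℝ) (u : Rd d → ℝ) : ℝ≥0∞ :=
  ∫⁻ x : Rd d, ∫⁻ y : Rd d,
    ENNReal.ofReal (|u x - u y| ^ r / ‖x - y‖ ^ ((d : ℝ) + s * r))

/-- Gagliardo seminorm `[u]_{s,r}`. -/
def gSemi (d : ℕ) (s r : ℝ) (u : Rd d → ℝ) : ℝ :=
  (gEnergy d s r u).toReal ^ (1 / r)

/-- Membership in `W₀^{s,r}(Ω)`: `u ∈ L^r`, finite Gagliardo energy, `u = 0` outside `Ω`. -/
def memW0 (d : ℕ) (Ω : Set (Rd d)) (s r : ℝ) (u : Rd d → ℝ) : Prop :=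
  MemLp u (ENNReal.ofReal r) volume ∧ gEnergy d s r u ≠ ⊤ ∧ ∀ x ∉ Ω, u x = 0

/-- The nonlocal energy form `⟨A_r(u), φ⟩` of the fractional `r`-Laplacian `(-Δ)^s_r`. -/
def formA (d : ℕ) (s r : ℝ) (u φ : Rd d → ℝ) : ℝ :=
  ∫ x : Rd d, ∫ y : Rd d,
    |u x - u y| ^ (r - 2) * (u x - u y) * (φ x - φ y) / ‖x - y‖ ^ ((d : ℝ) + s * r)

/-- `u` is a weak solution of `(EV; α, β)`:
`(-Δ)^{s₁}_p u + (-Δ)^{s₂}_q u = α|u|^{p-2}u + β|u|^{q-2}u` in `Ω`, `u = 0` outside `Ω`. -/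
def isWeakSol (d : ℕ) (Ω : Set (Rd d)) (s₁ s₂ p q α β : ℝ) (u : Rd d → ℝ) : Prop :=
  memW0 d Ω s₁ p u ∧ ∀ φ : Rd d → ℝ, memW0 d Ω s₁ p φ →
    formA d s₁ p u φ + formA d s₂ q u φ =
      α * ∫ x in Ω, |u x| ^ (p - 2) * u x * φ x +
        β * ∫ x in Ω, |u x| ^ (q - 2) * u x * φ x

/-- The first Dirichlet eigenvalue `λ¹_{s,r}(Ω)` via the Rayleigh quotient. -/
def lam1 (d : ℕ) (Ω : Set (Rd d)) (s r : ℝ) : ℝ :=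
  sInf {t : ℝ | ∃ u : Rd d → ℝ, memW0 d Ω s r u ∧
    (∫ x in Ω, |u x| ^ r) = 1 ∧ t = gSemi d s r u ^ r}

/-- The energy functional `I₊`. -/
def Iplus (d : ℕ) (Ω : Set (Rd d)) (s₁ s₂ p q α β : ℝ) (u : Rd d → ℝ) : ℝ :=
  gSemi d s₁ p u ^ p / p + gSemi d s₂ q u ^ q / q
    - α * (∫ x in Ω, max (u x) 0 ^ p) / p - β * (∫ x in Ω, max (u x) 0 ^ q) / q

lemma AUX_abs_rpow_sub_rpow_le {p M a b : ℝ} (hp : 1 ≤ p) (ha : 0 ≤ a) (hb : 0 ≤ b)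
    (haM : a ≤ M) (hbM : b ≤ M) : |a ^ p - b ^ p| ≤ p * M ^ (p - 1) * |a - b| := by
  have hderiv : ∀ x ∈ Set.Icc (0:ℝ) M, HasDerivWithinAt (fun x : ℝ => x ^ p)
      (p * x ^ (p - 1)) (Set.Icc 0 M) x := fun x _ =>
    (Real.hasDerivAt_rpow_const (Or.inr hp)).hasDerivWithinAt
  have hbound : ∀ x ∈ Set.Icc (0:ℝ) M, ‖p * x ^ (p - 1)‖ ≤ p * M ^ (p - 1) := by
    intro x hx
    rw [Real.norm_eq_abs, abs_mul, abs_of_nonneg (by linarith : (0:ℝ) ≤ p),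
      abs_of_nonneg (Real.rpow_nonneg hx.1 _)]
    exact mul_le_mul_of_nonneg_left (Real.rpow_le_rpow hx.1 hx.2 (by linarith)) (by linarith)
  have h := (convex_Icc (0:ℝ) M).norm_image_sub_le_of_norm_hasDerivWithin_le hderiv hbound
    ⟨hb, hbM⟩ ⟨ha, haM⟩
  simpa [Real.norm_eq_abs] using h

lemma AUX_abs_inv_rpow_sub_le {t c a b : ℝ} (ht : 0 < t) (hc : 0 < c) (ha : c ≤ a) (hb : c ≤ b) :
    |1 / a ^ t - 1 / b ^ t| ≤ t / c ^ (t + 1) * |a - b| := by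
  have h1 : ∀ x ∈ Set.Ici c, HasDerivWithinAt (fun x : ℝ => x ^ (-t))
      (-t * x ^ (-t - 1)) (Set.Ici c) x := fun x hx =>
    (Real.hasDerivAt_rpow_const (p := -t) (Or.inl (hc.trans_le hx).ne')).hasDerivWithinAt
  have h2 : ∀ x ∈ Set.Ici c, ‖-t * x ^ (-t - 1)‖ ≤ t / c ^ (t + 1) := by
    intro x hx
    have hx0 : (0:ℝ) < x := hc.trans_le hx
    rw [Real.norm_eq_abs, abs_mul, abs_neg, abs_of_nonneg ht.le,
      abs_of_nonneg (Real.rpow_nonneg hx0.le _)]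
    have hle : x ^ (-t - 1) ≤ c ^ (-t - 1) :=
      Real.rpow_le_rpow_of_nonpos hc hx (by linarith)
    have hceq : c ^ (-t - 1) = 1 / c ^ (t + 1) := by
      rw [show -t - 1 = -(t + 1) by ring, Real.rpow_neg hc.le, one_div]
    calc t * x ^ (-t - 1) ≤ t * c ^ (-t - 1) := mul_le_mul_of_nonneg_left hle ht.le
      _ = t / c ^ (t + 1) := by rw [hceq]; ring
  have h := (convex_Ici c).norm_image_sub_le_of_norm_hasDerivWithin_le h1 h2 hb ha
  have heq : ∀ x : ℝ, c ≤ x → x ^ (-t) = 1 / x ^ t := fun x hx => by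
    rw [Real.rpow_neg (hc.le.trans hx), one_div]
  rw [Real.norm_eq_abs, Real.norm_eq_abs, heq a ha, heq b hb] at h
  exact h

lemma AUX_pt_est {p t M c a b va vb : ℝ} (hp : 1 ≤ p) (ht : 0 < t) (hc : 0 < c)
    (ha : 0 ≤ a) (hb : 0 ≤ b) (hva : |va| ≤ M) (hvb : |vb| ≤ M) :
    |(|va| ^ p / (a + c) ^ t - |vb| ^ p / (b + c) ^ t)| ≤
      p * M ^ (p - 1) / c ^ t * |va - vb| + M ^ p * (t / c ^ (t + 1)) * |a - b| := by
  have hM : 0 ≤ M := (abs_nonneg va).trans hva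
  have hac : 0 < a + c := by linarith
  have hbc : 0 < b + c := by linarith
  have hact : (0:ℝ) < (a + c) ^ t := Real.rpow_pos_of_pos hac _
  have hbct : (0:ℝ) < (b + c) ^ t := Real.rpow_pos_of_pos hbc _
  have hct : (0:ℝ) < c ^ t := Real.rpow_pos_of_pos hc _
  have key : |va| ^ p / (a + c) ^ t - |vb| ^ p / (b + c) ^ t
      = (|va| ^ p - |vb| ^ p) / (a + c) ^ t
        + |vb| ^ p * (1 / (a + c) ^ t - 1 / (b + c) ^ t) := by
    field_simp
    ring
  rw [key]
  refine (abs_add_le _ _).trans (add_le_add ?_ ?_)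
  · rw [abs_div, abs_of_nonneg hact.le]
    have h1 : |(|va| ^ p - |vb| ^ p)| ≤ p * M ^ (p - 1) * |va - vb| :=
      (AUX_abs_rpow_sub_rpow_le hp (abs_nonneg _) (abs_nonneg _) hva hvb).trans
        (mul_le_mul_of_nonneg_left (abs_abs_sub_abs_le_abs_sub _ _) (by positivity))
    calc |(|va| ^ p - |vb| ^ p)| / (a + c) ^ t
        ≤ p * M ^ (p - 1) * |va - vb| / c ^ t :=
          div_le_div₀ (by positivity) h1 hct (Real.rpow_le_rpow hc.le (by linarith) (by positivity))
      _ = p * M ^ (p - 1) / c ^ t * |va - vb| := by ring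
  · rw [abs_mul, abs_of_nonneg (Real.rpow_nonneg (abs_nonneg _) _)]
    have h2 : |1 / (a + c) ^ t - 1 / (b + c) ^ t| ≤ t / c ^ (t + 1) * |a - b| := by
      have := AUX_abs_inv_rpow_sub_le ht hc (by linarith : c ≤ a + c) (by linarith : c ≤ b + c)
      simpa using this
    calc |vb| ^ p * |1 / (a + c) ^ t - 1 / (b + c) ^ t|
        ≤ M ^ p * (t / c ^ (t + 1) * |a - b|) :=
          mul_le_mul (Real.rpow_le_rpow (abs_nonneg _) hvb (by linarith)) h2 (abs_nonneg _)
            (by positivity)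
      _ = M ^ p * (t / c ^ (t + 1)) * |a - b| := by ring

lemma AUX_rpow_add_le {r A B : ℝ} (hr : 0 ≤ r) (hA : 0 ≤ A) (hB : 0 ≤ B) :
    (A + B) ^ r ≤ 2 ^ r * (A ^ r + B ^ r) := by
  have h1 : A + B ≤ 2 * max A B := by
    rcases le_total A B with h | h
    · rw [max_eq_right h]; linarith
    · rw [max_eq_left h]; linarith
  calc (A + B) ^ r ≤ (2 * max A B) ^ r := Real.rpow_le_rpow (by positivity) h1 hr
    _ = 2 ^ r * max A B ^ r := Real.mul_rpow (by norm_num) (le_max_of_le_left hA)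
    _ ≤ 2 ^ r * (A ^ r + B ^ r) := by
        refine mul_le_mul_of_nonneg_left ?_ (by positivity)
        rcases le_total A B with h | h
        · rw [max_eq_right h]; exact le_add_of_nonneg_left (Real.rpow_nonneg hA r)
        · rw [max_eq_left h]; exact le_add_of_nonneg_right (Real.rpow_nonneg hB r)

lemma AUX_pt_pow {r C₁ C₂ F X Y : ℝ} (hr : 0 ≤ r) (hC₁ : 0 ≤ C₁) (hC₂ : 0 ≤ C₂)
    (hX : 0 ≤ X) (hY : 0 ≤ Y) (hF : |F| ≤ C₁ * X + C₂ * Y) :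
    |F| ^ r ≤ 2 ^ r * C₁ ^ r * X ^ r + 2 ^ r * C₂ ^ r * Y ^ r := by
  calc |F| ^ r ≤ (C₁ * X + C₂ * Y) ^ r := Real.rpow_le_rpow (abs_nonneg _) hF hr
    _ ≤ 2 ^ r * ((C₁ * X) ^ r + (C₂ * Y) ^ r) := AUX_rpow_add_le hr (by positivity) (by positivity)
    _ = 2 ^ r * C₁ ^ r * X ^ r + 2 ^ r * C₂ ^ r * Y ^ r := by
        rw [Real.mul_rpow hC₁ hX, Real.mul_rpow hC₂ hY]; ring

lemma AUX_gEnergy_congr {d : ℕ} {s r : ℝ} {f g : Rd d → ℝ} (h : f =ᵐ[volume] g) :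
    gEnergy d s r f = gEnergy d s r g := by
  unfold gEnergy
  refine lintegral_congr_ae ?_
  filter_upwards [h] with x hx
  refine lintegral_congr_ae ?_
  filter_upwards [h] with y hy
  rw [hx, hy]

lemma AUX_gEnergy_le_of_pt {d : ℕ} {s r : ℝ} {f g h : Rd d → ℝ} {K₁ K₂ : ℝ}
    (hK₁ : 0 ≤ K₁) (hK₂ : 0 ≤ K₂) (hg : Measurable g)
    (hpt : ∀ x y, |f x - f y| ^ r ≤ K₁ * |g x - g y| ^ r + K₂ * |h x - h y| ^ r) :
    gEnergy d s r f ≤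
      ENNReal.ofReal K₁ * gEnergy d s r g + ENNReal.ofReal K₂ * gEnergy d s r h := by
  set E := (d : ℝ) + s * r with hE
  set G : Rd d → Rd d → ℝ≥0∞ := fun x y => ENNReal.ofReal (|g x - g y| ^ r / ‖x - y‖ ^ E) with hG
  set H : Rd d → Rd d → ℝ≥0∞ := fun x y => ENNReal.ofReal (|h x - h y| ^ r / ‖x - y‖ ^ E) with hH
  have hGmeas : Measurable (Function.uncurry G) := by
    apply ENNReal.measurable_ofReal.comp
    apply Measurable.div
    · exact (((hg.comp measurable_fst).sub (hg.comp measurable_snd)).abs).pow measurable_const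
    · exact ((measurable_fst.sub measurable_snd).norm).pow measurable_const
  have key : ∀ x y : Rd d, ENNReal.ofReal (|f x - f y| ^ r / ‖x - y‖ ^ E)
      ≤ ENNReal.ofReal K₁ * G x y + ENNReal.ofReal K₂ * H x y := by
    intro x y
    have hw0 : (0:ℝ) ≤ ‖x - y‖ ^ E := Real.rpow_nonneg (norm_nonneg _) _
    set w := ‖x - y‖ ^ E
    have h1 : |f x - f y| ^ r / w
        ≤ K₁ * (|g x - g y| ^ r / w) + K₂ * (|h x - h y| ^ r / w) := by
      have h2 := mul_le_mul_of_nonneg_right (hpt x y) (inv_nonneg.mpr hw0)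
      rw [div_eq_mul_inv, div_eq_mul_inv, div_eq_mul_inv]
      calc |f x - f y| ^ r * w⁻¹
          ≤ (K₁ * |g x - g y| ^ r + K₂ * |h x - h y| ^ r) * w⁻¹ := h2
        _ = K₁ * (|g x - g y| ^ r * w⁻¹) + K₂ * (|h x - h y| ^ r * w⁻¹) := by ring
    calc ENNReal.ofReal (|f x - f y| ^ r / w)
        ≤ ENNReal.ofReal (K₁ * (|g x - g y| ^ r / w) + K₂ * (|h x - h y| ^ r / w)) :=
          ENNReal.ofReal_le_ofReal h1
      _ ≤ ENNReal.ofReal (K₁ * (|g x - g y| ^ r / w))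
          + ENNReal.ofReal (K₂ * (|h x - h y| ^ r / w)) := ENNReal.ofReal_add_le
      _ = ENNReal.ofReal K₁ * G x y + ENNReal.ofReal K₂ * H x y := by
          rw [ENNReal.ofReal_mul hK₁, ENNReal.ofReal_mul hK₂]
  calc gEnergy d s r f
      ≤ ∫⁻ x, ∫⁻ y, (ENNReal.ofReal K₁ * G x y + ENNReal.ofReal K₂ * H x y) :=
        lintegral_mono fun x => lintegral_mono fun y => key x y
    _ = ∫⁻ x, (ENNReal.ofReal K₁ * ∫⁻ y, G x y) + ENNReal.ofReal K₂ * ∫⁻ y, H x y := by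
        refine lintegral_congr fun x => ?_
        rw [lintegral_add_left (hGmeas.of_uncurry_left.const_mul _),
          lintegral_const_mul' _ _ ENNReal.ofReal_ne_top,
          lintegral_const_mul' _ _ ENNReal.ofReal_ne_top]
    _ = ENNReal.ofReal K₁ * gEnergy d s r g + ENNReal.ofReal K₂ * gEnergy d s r h := by
        rw [lintegral_add_left (hGmeas.lintegral_prod_right.const_mul _),
          lintegral_const_mul' _ _ ENNReal.ofReal_ne_top,
          lintegral_const_mul' _ _ ENNReal.ofReal_ne_top]
        rfl
lemma AUX_memW0 (d : ℕ) (Ω : Set (Rd d)) (s r₁ : ℝ) (hr₁ : 1 ≤ r₁)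
    (hΩo : IsOpen Ω) (hΩb : Bornology.IsBounded Ω)
    (u v : Rd d → ℝ) (hu : memW0 d Ω s r₁ u) (hu0 : ∀ x, 0 ≤ u x)
    (hv : memW0 d Ω s r₁ v) (M : ℝ) (hM : 0 ≤ M) (hvM : ∀ x, |v x| ≤ M)
    (c p t : ℝ) (hc : 0 < c) (hp : 1 ≤ p) (ht : 0 < t) :
    memW0 d Ω s r₁ (fun x => |v x| ^ p / (u x + c) ^ t) := by
  have hp0 : (0:ℝ) < p := by linarith
  have hct : (0:ℝ) < c ^ t := Real.rpow_pos_of_pos hc _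
  -- vanishing outside Ω
  have hvan : ∀ x ∉ Ω, |v x| ^ p / (u x + c) ^ t = 0 := by
    intro x hx
    rw [hv.2.2 x hx, abs_zero, Real.zero_rpow hp0.ne', zero_div]
  -- measurability
  have hmeas : AEStronglyMeasurable (fun x => |v x| ^ p / (u x + c) ^ t) volume := by
    have h1 : AEMeasurable v volume := hv.1.1.aemeasurable
    have h2 : AEMeasurable u volume := hu.1.1.aemeasurable
    exact (((measurable_abs.comp_aemeasurable h1).pow aemeasurable_const).div
      ((h2.add aemeasurable_const).pow aemeasurable_const)).aestronglyMeasurable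
  -- Memℒp via bounded + bounded support
  have hℒp : MemLp (fun x => |v x| ^ p / (u x + c) ^ t) (ENNReal.ofReal r₁) volume := by
    set C : ℝ := M ^ p / c ^ t with hC
    have hC0 : 0 ≤ C := div_nonneg (Real.rpow_nonneg hM _) hct.le
    have hind : MemLp (Ω.indicator fun _ => C) (ENNReal.ofReal r₁) volume :=
      memLp_indicator_const _ hΩo.measurableSet C (Or.inr hΩb.measure_lt_top.ne)
    refine hind.of_le hmeas (ae_of_all _ fun x => ?_)
    by_cases hx : x ∈ Ω
    · rw [Set.indicator_of_mem hx]
      have hnum : |v x| ^ p ≤ M ^ p := Real.rpow_le_rpow (abs_nonneg _) (hvM x) hp0.le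
      have hden : c ^ t ≤ (u x + c) ^ t :=
        Real.rpow_le_rpow hc.le (by linarith [hu0 x]) ht.le
      have hle : |v x| ^ p / (u x + c) ^ t ≤ C :=
        div_le_div₀ (Real.rpow_nonneg hM _) hnum hct hden
      have h0 : 0 ≤ |v x| ^ p / (u x + c) ^ t :=
        div_nonneg (Real.rpow_nonneg (abs_nonneg _) _) (Real.rpow_nonneg (by linarith [hu0 x]) _)
      rw [Real.norm_eq_abs, Real.norm_eq_abs, abs_of_nonneg h0, abs_of_nonneg hC0]
      exact hle
    · rw [Set.indicator_of_notMem hx, hvan x hx]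
  -- measurable pointwise-controlled representatives
  have hum := hu.1.1
  have hvm := hv.1.1
  set u₀ : Rd d → ℝ := fun x => max (hum.mk u x) 0 with hu₀def
  set v₀ : Rd d → ℝ := fun x => max (min (hvm.mk v x) M) (-M) with hv₀def
  have hu₀m : Measurable u₀ := hum.measurable_mk.max measurable_const
  have hv₀m : Measurable v₀ := (hvm.measurable_mk.min measurable_const).max measurable_const
  have hu₀e : u =ᵐ[volume] u₀ := by
    filter_upwards [hum.ae_eq_mk] with x hx
    rw [hu₀def]; dsimp only; rw [← hx, max_eq_left (hu0 x)]
  have hv₀e : v =ᵐ[volume] v₀ := by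
    filter_upwards [hvm.ae_eq_mk] with x hx
    obtain ⟨h1, h2⟩ := abs_le.mp (hvM x)
    rw [hv₀def]; dsimp only; rw [← hx, min_eq_left h2, max_eq_left h1]
  have hu₀0 : ∀ x, 0 ≤ u₀ x := fun x => le_max_right _ _
  have hv₀M : ∀ x, |v₀ x| ≤ M := fun x =>
    abs_le.mpr ⟨le_max_right _ _, max_le (min_le_right _ _) (by linarith)⟩
  -- energy finiteness
  set C₁ : ℝ := p * M ^ (p - 1) / c ^ t with hC₁
  set C₂ : ℝ := M ^ p * (t / c ^ (t + 1)) with hC₂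
  have hC₁0 : 0 ≤ C₁ := div_nonneg (mul_nonneg hp0.le (Real.rpow_nonneg hM _)) hct.le
  have hC₂0 : 0 ≤ C₂ := mul_nonneg (Real.rpow_nonneg hM _) (by positivity)
  set K₁ : ℝ := 2 ^ r₁ * C₁ ^ r₁ with hK₁
  set K₂ : ℝ := 2 ^ r₁ * C₂ ^ r₁ with hK₂
  have hK₁0 : 0 ≤ K₁ := mul_nonneg (Real.rpow_nonneg (by norm_num) _) (Real.rpow_nonneg hC₁0 _)
  have hK₂0 : 0 ≤ K₂ := mul_nonneg (Real.rpow_nonneg (by norm_num) _) (Real.rpow_nonneg hC₂0 _)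
  set ψ₀ : Rd d → ℝ := fun x => |v₀ x| ^ p / (u₀ x + c) ^ t with hψ₀def
  have hψe : (fun x => |v x| ^ p / (u x + c) ^ t) =ᵐ[volume] ψ₀ := by
    filter_upwards [hu₀e, hv₀e] with x hx1 hx2
    rw [hψ₀def]; dsimp only; rw [hx1, hx2]
  have hpt : ∀ x y, |ψ₀ x - ψ₀ y| ^ r₁
      ≤ K₁ * |v₀ x - v₀ y| ^ r₁ + K₂ * |u₀ x - u₀ y| ^ r₁ := by
    intro x y
    have h1 := AUX_pt_est hp ht hc (hu₀0 x) (hu₀0 y) (hv₀M x) (hv₀M y)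
    have h2 := AUX_pt_pow (by linarith : (0:ℝ) ≤ r₁) hC₁0 hC₂0 (abs_nonneg (v₀ x - v₀ y))
      (abs_nonneg (u₀ x - u₀ y)) h1
    calc |ψ₀ x - ψ₀ y| ^ r₁
        ≤ 2 ^ r₁ * C₁ ^ r₁ * |v₀ x - v₀ y| ^ r₁
          + 2 ^ r₁ * C₂ ^ r₁ * |u₀ x - u₀ y| ^ r₁ := h2
      _ = K₁ * |v₀ x - v₀ y| ^ r₁ + K₂ * |u₀ x - u₀ y| ^ r₁ := by rw [hK₁, hK₂]
  have hEbound := AUX_gEnergy_le_of_pt (s := s) hK₁0 hK₂0 hv₀m hpt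
  have hEv : gEnergy d s r₁ v₀ = gEnergy d s r₁ v := AUX_gEnergy_congr hv₀e.symm
  have hEu : gEnergy d s r₁ u₀ = gEnergy d s r₁ u := AUX_gEnergy_congr hu₀e.symm
  rw [hEv, hEu] at hEbound
  have hEψ : gEnergy d s r₁ (fun x => |v x| ^ p / (u x + c) ^ t) = gEnergy d s r₁ ψ₀ :=
    AUX_gEnergy_congr hψe
  refine ⟨hℒp, ?_, hvan⟩
  rw [hEψ]
  exact ne_top_of_le_ne_top (ENNReal.add_ne_top.mpr
    ⟨ENNReal.mul_ne_top ENNReal.ofReal_ne_top hv.2.1,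
     ENNReal.mul_ne_top ENNReal.ofReal_ne_top hu.2.1⟩) hEbound

/-- Lemma 2.4 (for `ψ_k` and `η_k`): with `u ∈ W₀^{s,r₁}(Ω)` nonnegative,
`v ∈ W₀^{s,r₁}(Ω) ∩ L^∞`, and `u_k = u + 1/k`, the functions
`ψ_k = |v|^{r₁}/u_k^{r₂-1}` and `η_k = |v|^{r₁-r₂+1}/u_k^{r₁-r₂}` lie in
`W₀^{s,r₁}(Ω)`. -/
theorem test_functions_psi_eta_in_space
    (d : ℕ) (Ω : Set (Rd d)) (s r₁ r₂ : ℝ)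
    (hs0 : 0 < s) (hs1 : s < 1) (hr₂ : 1 < r₂) (hr : r₂ < r₁)
    (hΩo : IsOpen Ω) (hΩb : Bornology.IsBounded Ω)
    (u v : Rd d → ℝ) (hu : memW0 d Ω s r₁ u) (hu0 : ∀ x, 0 ≤ u x)
    (hv : memW0 d Ω s r₁ v) (M : ℝ) (hvM : ∀ x, |v x| ≤ M)
    (k : ℕ) (hk : 0 < k) :
    memW0 d Ω s r₁ (fun x => |v x| ^ r₁ / (u x + 1 / k) ^ (r₂ - 1)) ∧
    memW0 d Ω s r₁ (fun x => |v x| ^ (r₁ - r₂ + 1) / (u x + 1 / k) ^ (r₁ - r₂)) := by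
  have hM : 0 ≤ M := (abs_nonneg (v 0)).trans (hvM 0)
  have hc : (0:ℝ) < 1 / (k:ℝ) := one_div_pos.mpr (by exact_mod_cast hk)
  exact ⟨AUX_memW0 d Ω s r₁ (by linarith) hΩo hΩb u v hu hu0 hv M hM hvM
      (1 / (k:ℝ)) r₁ (r₂ - 1) hc (by linarith) (by linarith),
    AUX_memW0 d Ω s r₁ (by linarith) hΩo hΩb u v hu hu0 hv M hM hvM
      (1 / (k:ℝ)) (r₁ - r₂ + 1) (r₁ - r₂) hc (by linarith) (by linarith)⟩

end
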